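/- Under the Protocol 1 model: if N ≥ 2 and an attack (U_E, {U_F^{(r)}}) satisfies the no-error conditions (T'), (Z') and (X'), with F_{s,i} the associated unit vectors, then for any two injective maps s, s' : Fin r ↪ Fin N of the same length r and any bitstrings i, i' such that the Hamming weights of the kept substrings agree, wt(i∘s̄) = wt(i'∘s̄'), one has F_{s,i} = F_{s',i'}. In other words, Eve's final state depends only on r and on the Hamming weight of the string of bits kept (measured) by Bob. -/

import Mathlib

/-!
Protocol 1 model (randomization-based semi-quantum key distribution):
see Boyer, Gelles, Kenigsberg, Mor, "Semi-Quantum Key Distribution".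
-/

namespace SQKD1

/-- Bitstrings of length `N`. -/
abbrev Bits (N : ℕ) := Fin N → Bool

/-- The space attacked by `U_E`: Eve's probe together with the `N` travelling
qubits. -/
abbrev HE (N d : ℕ) := EuclideanSpace ℂ (Fin d × Bits N)

/-- The space attacked by `U_F^{(r)}`: Eve's probe together with the `r`
reflected qubits. -/
abbrev HF (d r : ℕ) := EuclideanSpace ℂ (Fin d × (Fin r → Bool))

/-- Hamming weight of a bitstring. -/
def wt {n : ℕ} (y : Fin n → Bool) : ℕ := (Finset.univ.filter fun k => y k = true).card

/-- The elementary tensor `v ⊗ δ_u` of a vector `v` of Eve's probe space with a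
standard basis vector `δ_u`. -/
noncomputable def tprod {d : ℕ} {ι : Type*} [DecidableEq ι]
    (v : EuclideanSpace ℂ (Fin d)) (u : ι) : EuclideanSpace ℂ (Fin d × ι) :=
  WithLp.toLp 2 (fun p : Fin d × ι => if p.2 = u then v p.1 else 0)

/-- Condition (T'): no error on TEST bits; `U_E (ε₀ ⊗ δ_i) = E_i ⊗ δ_i`. -/
def CondT {N d : ℕ} (hd : 0 < d) (UE : HE N d ≃ₗᵢ[ℂ] HE N d)
    (E : Bits N → EuclideanSpace ℂ (Fin d)) : Prop :=
  ∀ i : Bits N,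
    UE (EuclideanSpace.single ((⟨0, hd⟩ : Fin d), i) 1) = tprod (E i) i

/-- Condition (Z'): no error on Z-CTRL bits;
`U_F^{(r)} (E_i ⊗ δ_{i∘s}) = F_{s,i} ⊗ δ_{i∘s}`. -/
def CondZ {N d : ℕ} (UF : (r : ℕ) → r ≤ N → (HF d r ≃ₗᵢ[ℂ] HF d r))
    (E : Bits N → EuclideanSpace ℂ (Fin d))
    (F : (r : ℕ) → r ≤ N → (Fin r ↪ Fin N) → Bits N → EuclideanSpace ℂ (Fin d)) :
    Prop :=
  ∀ (r : ℕ) (hr : r ≤ N) (s : Fin r ↪ Fin N) (i : Bits N),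
    UF r hr (tprod (E i) (fun p => i (s p))) = tprod (F r hr s i) (fun p => i (s p))

/-- Condition (X'): no error on X-CTRL bits.  For `k := s p`, `i k = false` and
`i'` equal to `i` with bit `k` flipped, the state
`Φ = (1/√2)(F_{s,i} ⊗ δ_{i∘s} + F_{s,i'} ⊗ δ_{i'∘s})` has, at every index
`(a,t)`, the same coefficient as at `(a, t')`, where `t'` is `t` with bit `p`
flipped. -/
def CondX {N d : ℕ}
    (F : (r : ℕ) → r ≤ N → (Fin r ↪ Fin N) → Bits N → EuclideanSpace ℂ (Fin d)) :
    Prop :=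
  ∀ (r : ℕ) (hr : r ≤ N) (s : Fin r ↪ Fin N) (p : Fin r) (i : Bits N),
    i (s p) = false →
      ∀ (a : Fin d) (t : Fin r → Bool),
        ((Real.sqrt 2 : ℂ)⁻¹ •
            (tprod (F r hr s i) (fun q => i (s q)) +
              tprod (F r hr s (Function.update i (s p) true))
                (fun q => Function.update i (s p) true (s q)))) (a, t) =
        ((Real.sqrt 2 : ℂ)⁻¹ •
            (tprod (F r hr s i) (fun q => i (s q)) +
              tprod (F r hr s (Function.update i (s p) true))
                (fun q => Function.update i (s p) true (s q))))
          (a, Function.update t p (!(t p)))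

/-- Hamming weight of the substring of `i` kept (measured) by Bob, i.e. of the
restriction of `i` to the complement of the range of `s`. -/
def wtKept {N r : ℕ} (s : Fin r ↪ Fin N) (i : Bits N) : ℕ :=
  (Finset.univ.filter fun k => k ∉ Finset.univ.map s ∧ i k = true).card

section Aux

variable {N d : ℕ}

lemma tprod_inj {ι : Type*} [DecidableEq ι] (u : ι)
    {v w : EuclideanSpace ℂ (Fin d)} (h : tprod v u = tprod w u) : v = w := by
  ext a
  have := congrArg (fun x => x (a, u)) h
  simpa [tprod] using this

/-- From (X'): flipping a reflected bit from `false` to `true` does not change `F`. -/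
lemma F_flip {F : (r : ℕ) → r ≤ N → (Fin r ↪ Fin N) → Bits N → EuclideanSpace ℂ (Fin d)}
    (hX : CondX F) (r : ℕ) (hr : r ≤ N) (s : Fin r ↪ Fin N) (p : Fin r)
    (i : Bits N) (hi : i (s p) = false) :
    F r hr s i = F r hr s (Function.update i (s p) true) := by
  ext a
  have h := hX r hr s p i hi a (fun q => i (s q))
  have hts : (fun q => Function.update i (s p) true (s q))
      = Function.update (fun q => i (s q)) p true := by
    funext q
    by_cases hq : q = p
    · subst hq; simp
    · have hsq : s q ≠ s p := fun hc => hq (s.injective hc)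
      simp [Function.update_of_ne hq, Function.update_of_ne hsq]
  have htp : (fun q => i (s q)) p = false := hi
  have hne : Function.update (fun q => i (s q)) p true ≠ (fun q => i (s q)) := by
    intro hc
    have := congrFun hc p
    simp [hi] at this
  have hc0 : ((Real.sqrt 2 : ℂ)⁻¹ : ℂ) ≠ 0 := by
    simp [Real.sqrt_eq_zero']
  rw [hts] at h
  have hupd : Function.update (fun q => i (s q)) p (!(fun q => i (s q)) p)
      = Function.update (fun q => i (s q)) p true := by
    simp [htp]
  rw [hupd] at h
  have hne' : ¬ ((fun q => i (s q)) = Function.update (fun q => i (s q)) p true) :=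
    fun hc => hne hc.symm
  simp only [PiLp.smul_apply, PiLp.add_apply, tprod, PiLp.toLp_apply, smul_eq_mul] at h
  rw [if_pos trivial, if_neg hne', if_neg hne, if_pos trivial, add_zero, zero_add] at h
  exact mul_left_cancel₀ hc0 h

/-- From (Z'): `F` depends on `s` only through `E i` and the reflected pattern. -/
lemma F_eq_of_patterns
    {UF : (r : ℕ) → r ≤ N → (HF d r ≃ₗᵢ[ℂ] HF d r)}
    {E : Bits N → EuclideanSpace ℂ (Fin d)}
    {F : (r : ℕ) → r ≤ N → (Fin r ↪ Fin N) → Bits N → EuclideanSpace ℂ (Fin d)}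
    (hZ : CondZ UF E F) (r : ℕ) (hr : r ≤ N) (s s' : Fin r ↪ Fin N)
    (i j : Bits N) (hE : E i = E j)
    (hp : (fun p => i (s p)) = fun p => j (s' p)) :
    F r hr s i = F r hr s' j := by
  apply tprod_inj (fun p => i (s p))
  have h1 := hZ r hr s i
  have h2 := hZ r hr s' j
  calc tprod (F r hr s i) (fun p => i (s p))
      = UF r hr (tprod (E i) (fun p => i (s p))) := h1.symm
    _ = UF r hr (tprod (E j) (fun p => j (s' p))) := by rw [hE, hp]
    _ = tprod (F r hr s' j) (fun p => j (s' p)) := h2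
    _ = tprod (F r hr s' j) (fun p => i (s p)) := by rw [hp]

/-- From (Z') and unitarity: `E` is determined by `F` and the reflected pattern. -/
lemma E_eq_of_F
    {UF : (r : ℕ) → r ≤ N → (HF d r ≃ₗᵢ[ℂ] HF d r)}
    {E : Bits N → EuclideanSpace ℂ (Fin d)}
    {F : (r : ℕ) → r ≤ N → (Fin r ↪ Fin N) → Bits N → EuclideanSpace ℂ (Fin d)}
    (hZ : CondZ UF E F) (r : ℕ) (hr : r ≤ N) (s s' : Fin r ↪ Fin N)
    (i j : Bits N) (hF : F r hr s i = F r hr s' j)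
    (hp : (fun p => i (s p)) = fun p => j (s' p)) :
    E i = E j := by
  apply tprod_inj (fun p => i (s p))
  apply (UF r hr).injective
  calc UF r hr (tprod (E i) (fun p => i (s p)))
      = tprod (F r hr s i) (fun p => i (s p)) := hZ r hr s i
    _ = tprod (F r hr s' j) (fun p => j (s' p)) := by rw [hF, hp]
    _ = UF r hr (tprod (E j) (fun p => j (s' p))) := (hZ r hr s' j).symm
    _ = UF r hr (tprod (E j) (fun p => i (s p))) := by rw [hp]

/-- The bitstring `i` with all reflected bits set to `false`. -/
def zeroOn {r : ℕ} (s : Fin r ↪ Fin N) (i : Bits N) : Bits N :=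
  fun k => if k ∈ Finset.univ.map s then false else i k

lemma zeroOn_apply_mem {r : ℕ} (s : Fin r ↪ Fin N) (i : Bits N) (p : Fin r) :
    zeroOn s i (s p) = false := by
  simp [zeroOn]

/-- From (X'): `F` does not depend on the reflected bits. -/
lemma F_zeroOn {F : (r : ℕ) → r ≤ N → (Fin r ↪ Fin N) → Bits N → EuclideanSpace ℂ (Fin d)}
    (hX : CondX F) (r : ℕ) (hr : r ≤ N) (s : Fin r ↪ Fin N) (i : Bits N) :
    F r hr s i = F r hr s (zeroOn s i) := by
  suffices h : ∀ n (i : Bits N),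
      (Finset.univ.filter fun p : Fin r => i (s p) = true).card = n →
      F r hr s i = F r hr s (zeroOn s i) from h _ i rfl
  intro n
  induction n with
  | zero =>
    intro i hi
    have hz : zeroOn s i = i := by
      funext k
      by_cases hk : k ∈ Finset.univ.map s
      · obtain ⟨p, _, rfl⟩ := Finset.mem_map.mp hk
        have : i (s p) = false := by
          rw [Finset.card_eq_zero, Finset.filter_eq_empty_iff] at hi
          have := hi (Finset.mem_univ p)
          simpa using this
        simp [zeroOn, this]
      · simp [zeroOn, hk]
    rw [hz]
  | succ n ih =>
    intro i hi
    have hne : (Finset.univ.filter fun p : Fin r => i (s p) = true).Nonempty := by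
      rw [← Finset.card_pos, hi]; omega
    obtain ⟨p, hp⟩ := hne
    have hptrue : i (s p) = true := (Finset.mem_filter.mp hp).2
    set j : Bits N := Function.update i (s p) false with hj
    have hj_sp : j (s p) = false := by simp [hj]
    have hij : Function.update j (s p) true = i := by
      funext k
      by_cases hk : k = s p
      · subst hk; simp [hptrue]
      · simp [hj, Function.update_of_ne hk]
    have hflip := F_flip hX r hr s p j hj_sp
    rw [hij] at hflip
    have hzz : zeroOn s j = zeroOn s i := by
      funext k
      by_cases hk : k ∈ Finset.univ.map s
      · simp [zeroOn, hk]
      · have hksp : k ≠ s p := by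
          intro hc; apply hk; subst hc; simp
        simp [zeroOn, hk, hj, Function.update_of_ne hksp]
    have hcard : (Finset.univ.filter fun q : Fin r => j (s q) = true).card = n := by
      have hset : (Finset.univ.filter fun q : Fin r => j (s q) = true)
          = (Finset.univ.filter fun q : Fin r => i (s q) = true).erase p := by
        ext q
        simp only [Finset.mem_filter, Finset.mem_erase, Finset.mem_univ, true_and]
        constructor
        · intro hq
          have hqp : q ≠ p := by
            intro hc; subst hc; rw [hj_sp] at hq; exact Bool.false_ne_true hq
          refine ⟨hqp, ?_⟩
          have : s q ≠ s p := fun hc => hqp (s.injective hc)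
          rwa [hj, Function.update_of_ne this] at hq
        · intro ⟨hqp, hq⟩
          have : s q ≠ s p := fun hc => hqp (s.injective hc)
          rwa [hj, Function.update_of_ne this]
      rw [hset, Finset.card_erase_of_mem hp, hi]
      omega
    rw [← hflip, ← hzz]
    exact ih j hcard

/-- Auxiliary: a one-point embedding `Fin 1 ↪ Fin N`. -/
def single1 (k : Fin N) : Fin 1 ↪ Fin N :=
  ⟨fun _ => k, fun a b _ => Subsingleton.elim a b⟩

lemma wt_update_true {i : Bits N} {k : Fin N} (h : i k = false) :
    wt (Function.update i k true) = wt i + 1 := by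
  unfold wt
  have hset : (Finset.univ.filter fun m => Function.update i k true m = true)
      = insert k (Finset.univ.filter fun m => i m = true) := by
    ext m
    simp only [Finset.mem_filter, Finset.mem_insert, Finset.mem_univ, true_and]
    by_cases hm : m = k
    · subst hm; simp
    · simp [Function.update_of_ne hm, hm]
  rw [hset, Finset.card_insert_of_notMem (by simp [h])]

lemma wt_update_false {i : Bits N} {k : Fin N} (h : i k = true) :
    wt (Function.update i k false) + 1 = wt i := by
  unfold wt
  have hset : (Finset.univ.filter fun m => Function.update i k false m = true)
      = (Finset.univ.filter fun m => i m = true).erase k := by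
    ext m
    simp only [Finset.mem_filter, Finset.mem_erase, Finset.mem_univ, true_and]
    by_cases hm : m = k
    · subst hm; simp
    · simp [Function.update_of_ne hm, hm]
  rw [hset, Finset.card_erase_of_mem (by simp [h])]
  have : 0 < (Finset.univ.filter fun m => i m = true).card :=
    Finset.card_pos.mpr ⟨k, by simp [h]⟩
  omega

/-- From (X'), (Z'): a swap of a `true` bit with a `false` bit preserves `E`. -/
lemma E_swap
    {UF : (r : ℕ) → r ≤ N → (HF d r ≃ₗᵢ[ℂ] HF d r)}
    {E : Bits N → EuclideanSpace ℂ (Fin d)}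
    {F : (r : ℕ) → r ≤ N → (Fin r ↪ Fin N) → Bits N → EuclideanSpace ℂ (Fin d)}
    (hZ : CondZ UF E F) (hX : CondX F) (hN1 : 1 ≤ N)
    {k₁ k₂ : Fin N} (hk : k₁ ≠ k₂) {i : Bits N}
    (h1 : i k₁ = true) (h2 : i k₂ = false) :
    E i = E (Function.update (Function.update i k₁ false) k₂ true) := by
  set m : Bits N := Function.update i k₁ false with hm
  set j : Bits N := Function.update m k₂ true with hj
  set s₁ : Fin 1 ↪ Fin N := single1 k₁
  set s₂ : Fin 1 ↪ Fin N := single1 k₂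
  have hs₁ : ∀ p : Fin 1, s₁ p = k₁ := fun _ => rfl
  have hs₂ : ∀ p : Fin 1, s₂ p = k₂ := fun _ => rfl
  have hm1 : m k₁ = false := by simp [hm]
  have hm2 : m k₂ = false := by
    rw [hm, Function.update_of_ne (Ne.symm hk), h2]
  have e1 : Function.update m k₁ true = i := by
    funext k
    by_cases hkk : k = k₁
    · subst hkk; simp [h1]
    · simp [hm, Function.update_of_ne hkk]
  have A1 : F 1 hN1 s₁ m = F 1 hN1 s₁ i := by
    have := F_flip hX 1 hN1 s₁ 0 m (by rw [hs₁ 0]; exact hm1)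
    rwa [hs₁ 0, e1] at this
  have A2 : F 1 hN1 s₂ m = F 1 hN1 s₂ j := by
    have := F_flip hX 1 hN1 s₂ 0 m (by rw [hs₂ 0]; exact hm2)
    rwa [hs₂ 0, ← hj] at this
  have B : F 1 hN1 s₁ m = F 1 hN1 s₂ m := by
    apply F_eq_of_patterns hZ 1 hN1 s₁ s₂ m m rfl
    funext p
    rw [hs₁ p, hs₂ p, hm1, hm2]
  have hFij : F 1 hN1 s₁ i = F 1 hN1 s₂ j := by rw [← A1, B, A2]
  have hj2 : j k₂ = true := by simp [hj]
  exact E_eq_of_F hZ 1 hN1 s₁ s₂ i j hFij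
    (funext fun p => by rw [hs₁ p, hs₂ p, h1, hj2])

/-- From (X'), (Z'): `E` depends only on the Hamming weight. -/
lemma E_wt
    {UF : (r : ℕ) → r ≤ N → (HF d r ≃ₗᵢ[ℂ] HF d r)}
    {E : Bits N → EuclideanSpace ℂ (Fin d)}
    {F : (r : ℕ) → r ≤ N → (Fin r ↪ Fin N) → Bits N → EuclideanSpace ℂ (Fin d)}
    (hZ : CondZ UF E F) (hX : CondX F) (hN1 : 1 ≤ N)
    (i j : Bits N) (hw : wt i = wt j) : E i = E j := by
  suffices h : ∀ n (i j : Bits N), wt i = wt j →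
      (Finset.univ.filter fun k => ¬ i k = j k).card ≤ n → E i = E j by
    exact h N i j hw (le_trans (Finset.card_le_card (Finset.filter_subset _ _))
      (by simp))
  intro n
  induction n with
  | zero =>
    intro i j _ hc
    have : i = j := by
      funext k
      by_contra hk
      have : k ∈ Finset.univ.filter fun k => ¬ i k = j k := by simp [hk]
      rw [Nat.le_zero, Finset.card_eq_zero] at hc
      simp [hc] at this
    rw [this]
  | succ n ih =>
    intro i j hw hc
    by_cases hD : (Finset.univ.filter fun k => ¬ i k = j k) = ∅
    · have : i = j := by
        funext k
        by_contra hk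
        have : k ∈ Finset.univ.filter fun k => ¬ i k = j k := by simp [hk]
        simp [hD] at this
      rw [this]
    · -- the sets A = {i = T, j = F} and B = {i = F, j = T} have equal cards
      set A := Finset.univ.filter fun k => i k = true ∧ j k = false with hA
      set B := Finset.univ.filter fun k => i k = false ∧ j k = true with hB
      have hcards : A.card = B.card := by
        have hi' : (Finset.univ.filter fun k => i k = true ∧ j k = true).card
            + A.card = wt i := by
          have h0 := Finset.card_filter_add_card_filter_not
            (s := Finset.univ.filter fun k => i k = true)
            (p := fun k => j k = true)
          have e1 : (Finset.univ.filter fun k => i k = true).filter (fun k => j k = true)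
              = Finset.univ.filter fun k => i k = true ∧ j k = true := by
            rw [Finset.filter_filter]
          have e2 : (Finset.univ.filter fun k => i k = true).filter
              (fun k => ¬ j k = true) = A := by
            rw [Finset.filter_filter, hA]
            ext k; simp
          rw [e1, e2] at h0
          rw [h0, wt]
        have hj' : (Finset.univ.filter fun k => i k = true ∧ j k = true).card
            + B.card = wt j := by
          have h0 := Finset.card_filter_add_card_filter_not
            (s := Finset.univ.filter fun k => j k = true)
            (p := fun k => i k = true)
          have e1 : (Finset.univ.filter fun k => j k = true).filter (fun k => i k = true)
              = Finset.univ.filter fun k => i k = true ∧ j k = true := by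
            rw [Finset.filter_filter]
            ext k; simp; tauto
          have e2 : (Finset.univ.filter fun k => j k = true).filter
              (fun k => ¬ i k = true) = B := by
            rw [Finset.filter_filter, hB]
            ext k; simp; tauto
          rw [e1, e2] at h0
          rw [h0, wt]
        omega
      have hAB : (Finset.univ.filter fun k => ¬ i k = j k) = A ∪ B := by
        ext k
        simp only [hA, hB, Finset.mem_union, Finset.mem_filter, Finset.mem_univ, true_and]
        cases hik : i k <;> cases hjk : j k <;> simp
      have hAne : A.Nonempty := by
        by_contra hA0
        rw [Finset.not_nonempty_iff_eq_empty] at hA0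
        have hB0 : B = ∅ := by
          rw [← Finset.card_eq_zero, ← hcards, hA0, Finset.card_empty]
        rw [hAB, hA0, hB0] at hD
        simp at hD
      have hBne : B.Nonempty := by
        rw [← Finset.card_pos, ← hcards, Finset.card_pos]
        exact hAne
      obtain ⟨k₁, hk₁⟩ := hAne
      obtain ⟨k₂, hk₂⟩ := hBne
      rw [hA, Finset.mem_filter] at hk₁
      rw [hB, Finset.mem_filter] at hk₂
      have hkne : k₁ ≠ k₂ := by
        intro hc; rw [hc] at hk₁
        rw [hk₁.2.1] at hk₂; exact Bool.false_ne_true hk₂.2.1.symm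
      set i' : Bits N := Function.update (Function.update i k₁ false) k₂ true with hi'
      have hEi : E i = E i' := E_swap hZ hX hN1 hkne hk₁.2.1 hk₂.2.1
      have hwi' : wt i' = wt i := by
        have h1 := wt_update_false (i := i) (k := k₁) hk₁.2.1
        have h2 : Function.update i k₁ false k₂ = false := by
          rw [Function.update_of_ne (Ne.symm hkne), hk₂.2.1]
        have h3 := wt_update_true (i := Function.update i k₁ false) (k := k₂) h2
        rw [hi', h3]
        omega
      have hi'k₁ : i' k₁ = false := by
        rw [hi', Function.update_of_ne hkne]; simp
      have hi'k₂ : i' k₂ = true := by simp [hi']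
      have hcard' : (Finset.univ.filter fun k => ¬ i' k = j k).card ≤ n := by
        have hsub : (Finset.univ.filter fun k => ¬ i' k = j k)
            ⊆ (Finset.univ.filter fun k => ¬ i k = j k).erase k₁ := by
          intro k hk
          rw [Finset.mem_filter] at hk
          rw [Finset.mem_erase, Finset.mem_filter]
          have hk1 : k ≠ k₁ := by
            intro hc; subst hc
            rw [hi'k₁, hk₁.2.2] at hk; exact hk.2 rfl
          have hk2 : k ≠ k₂ := by
            intro hc; subst hc
            rw [hi'k₂, hk₂.2.2] at hk; exact hk.2 rfl
          refine ⟨hk1, Finset.mem_univ _, ?_⟩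
          have : i' k = i k := by
            rw [hi', Function.update_of_ne hk2, Function.update_of_ne hk1]
          rw [← this]
          exact hk.2
        have hk₁mem : k₁ ∈ Finset.univ.filter fun k => ¬ i k = j k := by
          rw [Finset.mem_filter]
          refine ⟨Finset.mem_univ _, ?_⟩
          rw [hk₁.2.1, hk₁.2.2]; simp
        have := Finset.card_le_card hsub
        rw [Finset.card_erase_of_mem hk₁mem] at this
        have hpos : 1 ≤ (Finset.univ.filter fun k => ¬ i k = j k).card :=
          Finset.card_pos.mpr ⟨k₁, hk₁mem⟩
        omega
      rw [hEi]
      exact ih i' j (by rw [hwi', hw]) hcard'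

end Aux

/-- **Proposition 3 of the paper.** If `N ≥ 2` and the attack
induces no error on TEST and CTRL bits, then for two injections `s`, `s'` of
the same length `r` and bitstrings `i`, `i'` with `wt(i∘s̄) = wt(i'∘s̄')`, one
has `F_{s,i} = F_{s',i'}`: Eve's final state depends only on `r` and on the
Hamming weight of the string measured by Bob. -/
theorem protocol1_F_depends_only_on_kept_weight (N d : ℕ) (hN : 2 ≤ N) (hd : 0 < d)
    (UE : HE N d ≃ₗᵢ[ℂ] HE N d)
    (UF : (r : ℕ) → r ≤ N → (HF d r ≃ₗᵢ[ℂ] HF d r))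
    (E : Bits N → EuclideanSpace ℂ (Fin d))
    (F : (r : ℕ) → r ≤ N → (Fin r ↪ Fin N) → Bits N → EuclideanSpace ℂ (Fin d))
    (hT : CondT hd UE E) (hZ : CondZ UF E F) (hX : CondX F) :
    ∀ (r : ℕ) (hr : r ≤ N) (s s' : Fin r ↪ Fin N) (i i' : Bits N),
      wtKept s i = wtKept s' i' →
      F r hr s i = F r hr s' i' := by
  intro r hr s s' i i' hw
  have hN1 : 1 ≤ N := by omega
  set i₀ : Bits N := zeroOn s i with hi₀
  set i₀' : Bits N := zeroOn s' i' with hi₀'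
  have hwt : ∀ (t : Fin r ↪ Fin N) (b : Bits N), wt (zeroOn t b) = wtKept t b := by
    intro t b
    unfold wt wtKept
    congr 1
    ext k
    by_cases hk : k ∈ Finset.univ.map t <;> simp [zeroOn, hk]
  have hE : E i₀ = E i₀' :=
    E_wt hZ hX hN1 i₀ i₀' (by rw [hi₀, hi₀', hwt, hwt, hw])
  have hpat : (fun p => i₀ (s p)) = fun p => i₀' (s' p) := by
    funext p
    rw [hi₀, hi₀', zeroOn_apply_mem, zeroOn_apply_mem]
  calc F r hr s i = F r hr s i₀ := F_zeroOn hX r hr s i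
    _ = F r hr s' i₀' := F_eq_of_patterns hZ r hr s s' i₀ i₀' hE hpat
    _ = F r hr s' i' := (F_zeroOn hX r hr s' i').symm

end SQKD1
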